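/- Let G be a connected graph on n vertices with adjacency eigenvalues λ₁ ≥ ⋯ ≥ λₙ, λ = max{|λ₂|,|λₙ|}, and normalized Perron eigenvector ν with minimum entry ν_min. Then the vertex integrity satisfies ι(G) ≥ n(1 − 2λ/(n(λ + λ₁)ν_min²)). -/

import Mathlib

open Matrix Finset

set_option maxHeartbeats 1000000

open scoped RealInnerProductSpace

/-- The largest size of a connected component of the subgraph of `G` induced on the
complement of `S` (`0` if `S` is the whole vertex set). -/
noncomputable def maxCompSize {n : ℕ} (G : SimpleGraph (Fin n)) (S : Finset (Fin n)) : ℕ :=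
  sSup {k | ∃ v : {x : Fin n | x ∉ S},
    k = Nat.card {w : {x : Fin n | x ∉ S} // (G.induce {x : Fin n | x ∉ S}).Reachable v w}}

/-- The vertex integrity `ι(G) = min_{S ⊆ V} (|S| + κ(G − S))`. -/
noncomputable def vertexIntegrity {n : ℕ} (G : SimpleGraph (Fin n)) : ℕ :=
  sInf {m | ∃ S : Finset (Fin n), m = S.card + maxCompSize G S}

lemma dot_w_mulVec {n : ℕ} {A : Matrix (Fin n) (Fin n) ℝ} (hAH : A.IsHermitian)
    (i : Fin n) (x : Fin n → ℝ) :
    dotProduct (⇑(hAH.eigenvectorBasis i)) (A *ᵥ x)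
      = hAH.eigenvalues i * dotProduct (⇑(hAH.eigenvectorBasis i)) x := by
  have hAT : Aᵀ = A := by
    have := hAH; rwa [Matrix.IsHermitian, Matrix.conjTranspose_eq_transpose_of_trivial] at this
  rw [Matrix.dotProduct_mulVec, ← Matrix.mulVec_transpose, hAT, hAH.mulVec_eigenvectorBasis]
  simp [smul_dotProduct]

lemma dot_eq_sum {n : ℕ} {A : Matrix (Fin n) (Fin n) ℝ} (hAH : A.IsHermitian)
    (x y : Fin n → ℝ) :
    dotProduct x y
      = ∑ i, dotProduct x (⇑(hAH.eigenvectorBasis i)) *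
          dotProduct (⇑(hAH.eigenvectorBasis i)) y := by
  have inner_eq : ∀ (a b : EuclideanSpace ℝ (Fin n)), ⟪a, b⟫ = dotProduct (⇑a) (⇑b) := by
    intro a b; simp [PiLp.inner_apply, RCLike.inner_apply, dotProduct, mul_comm]
  have H := hAH.eigenvectorBasis.sum_inner_mul_inner
    ((WithLp.equiv 2 (Fin n → ℝ)).symm x) ((WithLp.equiv 2 (Fin n → ℝ)).symm y)
  simp only [inner_eq, Equiv.apply_symm_apply] at H
  exact H.symm

lemma bilin_bound {n : ℕ} {A : Matrix (Fin n) (Fin n) ℝ} (hAH : A.IsHermitian)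
    {L : ℝ} (hL : 0 ≤ L) (u v : Fin n → ℝ)
    (h : ∀ i, |hAH.eigenvalues i| ≤ L ∨ dotProduct (⇑(hAH.eigenvectorBasis i)) u = 0) :
    |dotProduct u (A *ᵥ v)| ≤ L * Real.sqrt (∑ i, u i ^ 2) * Real.sqrt (∑ i, v i ^ 2) := by
  classical
  set w : Fin n → Fin n → ℝ := fun i => ⇑(hAH.eigenvectorBasis i) with hw
  set μ : Fin n → ℝ := hAH.eigenvalues with hμ
  set c : Fin n → ℝ := fun i => dotProduct (w i) u with hc
  set d : Fin n → ℝ := fun i => dotProduct (w i) v with hd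
  have inner_eq : ∀ (x y : EuclideanSpace ℝ (Fin n)), ⟪x, y⟫ = dotProduct (⇑x) (⇑y) := by
    intro x y; simp [PiLp.inner_apply, RCLike.inner_apply, dotProduct, mul_comm]
  have hAT : Aᵀ = A := by
    have := hAH; rwa [Matrix.IsHermitian, Matrix.conjTranspose_eq_transpose_of_trivial] at this
  have hwd : ∀ i (x : Fin n → ℝ), dotProduct (w i) (A *ᵥ x) = μ i * dotProduct (w i) x := by
    intro i x
    rw [Matrix.dotProduct_mulVec, ← Matrix.mulVec_transpose, hAT, hAH.mulVec_eigenvectorBasis]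
    simp [smul_dotProduct]
    rfl
  -- key identity
  have hkey : dotProduct u (A *ᵥ v) = ∑ i, μ i * (c i * d i) := by
    have H := hAH.eigenvectorBasis.sum_inner_mul_inner
      ((WithLp.equiv 2 (Fin n → ℝ)).symm u) ((WithLp.equiv 2 (Fin n → ℝ)).symm (A *ᵥ v))
    simp only [inner_eq, WithLp.equiv_symm_apply, WithLp.ofLp_toLp] at H
    rw [← H]
    apply Finset.sum_congr rfl
    intro i _
    rw [show ((hAH.eigenvectorBasis i).ofLp : Fin n → ℝ) = w i from rfl]
    rw [hwd i v]
    have : dotProduct u (w i) = c i := by simp [hc, dotProduct, mul_comm]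
    rw [this]; ring
  -- Parseval
  have parseval : ∀ x : Fin n → ℝ, ∑ i, (dotProduct (w i) x) ^ 2 = ∑ i, x i ^ 2 := by
    intro x
    have H := hAH.eigenvectorBasis.sum_inner_mul_inner
      ((WithLp.equiv 2 (Fin n → ℝ)).symm x) ((WithLp.equiv 2 (Fin n → ℝ)).symm x)
    simp only [inner_eq, Equiv.apply_symm_apply] at H
    calc ∑ i, (dotProduct (w i) x) ^ 2
        = ∑ i, dotProduct x (w i) * dotProduct (w i) x := by
          apply Finset.sum_congr rfl; intro i _
          rw [show dotProduct x (w i) = dotProduct (w i) x from by simp [dotProduct, mul_comm]]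
          ring
      _ = dotProduct x x := H
      _ = ∑ i, x i ^ 2 := by simp [dotProduct, sq]
  rw [hkey]
  calc |∑ i, μ i * (c i * d i)| ≤ ∑ i, |μ i * (c i * d i)| := Finset.abs_sum_le_sum_abs _ _
    _ ≤ ∑ i, L * (|c i| * |d i|) := by
        apply Finset.sum_le_sum
        intro i _
        rcases h i with hi | hi
        · rw [abs_mul, abs_mul]
          exact mul_le_mul_of_nonneg_right hi (by positivity)
        · have : c i = 0 := hi
          simp [this]
    _ = L * ∑ i, |c i| * |d i| := by rw [Finset.mul_sum]
    _ ≤ L * (Real.sqrt (∑ i, |c i| ^ 2) * Real.sqrt (∑ i, |d i| ^ 2)) := by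
        apply mul_le_mul_of_nonneg_left (Real.sum_mul_le_sqrt_mul_sqrt _ _ _) hL
    _ = L * Real.sqrt (∑ i, u i ^ 2) * Real.sqrt (∑ i, v i ^ 2) := by
        simp only [sq_abs]
        rw [parseval u, parseval v, mul_assoc]

lemma perp_bound {n : ℕ} (hpos : 0 < n) {A : Matrix (Fin n) (Fin n) ℝ} (hAH : A.IsHermitian)
    (lam : Fin n → ℝ)
    (e : Fin n ≃ Fin n) (he : ∀ i, lam i = hAH.eigenvalues (e i))
    (ν : Fin n → ℝ) (hνnorm : ∑ i, ν i ^ 2 = 1)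
    (hνeig : A *ᵥ ν = lam ⟨0, hpos⟩ • ν)
    (lamAbs : ℝ) (hAbs : ∀ j : Fin n, j ≠ ⟨0, hpos⟩ → |lam j| ≤ lamAbs)
    (hlam0 : 0 ≤ lam ⟨0, hpos⟩)
    (u : Fin n → ℝ) (hu : dotProduct u ν = 0) :
    ∀ i, |hAH.eigenvalues i| ≤ lamAbs ∨ dotProduct (⇑(hAH.eigenvectorBasis i)) u = 0 := by
  classical
  set z : Fin n := ⟨0, hpos⟩ with hz
  set lam0 : ℝ := lam z with hlam0def
  have heig' : ∀ i, hAH.eigenvalues i = lam (e.symm i) := by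
    intro i; rw [he (e.symm i), Equiv.apply_symm_apply]
  intro i
  by_cases hzi : e.symm i = z
  · by_cases hcase : lam0 ≤ lamAbs
    · left; rw [heig', hzi, abs_of_nonneg hlam0]; exact hcase
    · right
      push_neg at hcase
      -- coefficients of ν vanish away from i
      have hcoeff : ∀ k, k ≠ i → dotProduct (⇑(hAH.eigenvectorBasis k)) ν = 0 := by
        intro k hk
        by_contra hne
        have h1 := dot_w_mulVec hAH k ν
        rw [hνeig, dotProduct_smul] at h1
        have hμ : hAH.eigenvalues k = lam0 := by
          rw [smul_eq_mul] at h1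
          have h2 : (hAH.eigenvalues k - lam0) * dotProduct (⇑(hAH.eigenvectorBasis k)) ν = 0 := by
            rw [sub_mul]; linarith
          have := (mul_eq_zero.mp h2).resolve_right hne
          linarith
        have : e.symm k = z := by
          by_contra hkz
          have := hAbs (e.symm k) hkz
          rw [← heig'] at this
          rw [hμ] at this
          have := le_trans (le_abs_self _) this
          linarith
        have : k = i := by
          apply e.symm.injective; rw [this, hzi]
        exact hk this
      have hνi : dotProduct (⇑(hAH.eigenvectorBasis i)) ν ≠ 0 := by
        intro h0
        have H := dot_eq_sum hAH ν ν
        have hall : ∀ k ∈ Finset.univ, dotProduct ν (⇑(hAH.eigenvectorBasis k)) *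
            dotProduct (⇑(hAH.eigenvectorBasis k)) ν = 0 := by
          intro k _
          by_cases hk : k = i
          · subst hk; rw [h0, mul_zero]
          · rw [hcoeff k hk, mul_zero]
        rw [Finset.sum_eq_zero hall] at H
        have : dotProduct ν ν = ∑ i, ν i ^ 2 := by simp [dotProduct, sq]
        rw [this, hνnorm] at H
        exact one_ne_zero H
      have Hu := dot_eq_sum hAH u ν
      rw [hu] at Hu
      have : ∑ k, dotProduct u (⇑(hAH.eigenvectorBasis k)) *
          dotProduct (⇑(hAH.eigenvectorBasis k)) ν
          = dotProduct u (⇑(hAH.eigenvectorBasis i)) * dotProduct (⇑(hAH.eigenvectorBasis i)) ν := by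
        rw [Finset.sum_eq_single i]
        · intro k _ hk; rw [hcoeff k hk, mul_zero]
        · intro h; exact absurd (Finset.mem_univ i) h
      rw [this] at Hu
      have := (mul_eq_zero.mp Hu.symm).resolve_right hνi
      rwa [dotProduct_comm] at this
  · left
    rw [heig']
    exact hAbs _ hzi

lemma eml_bound {n : ℕ} (hpos : 0 < n) {A : Matrix (Fin n) (Fin n) ℝ} (hAH : A.IsHermitian)
    (lam : Fin n → ℝ)
    (e : Fin n ≃ Fin n) (he : ∀ i, lam i = hAH.eigenvalues (e i))
    (ν : Fin n → ℝ) (hνnorm : ∑ i, ν i ^ 2 = 1)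
    (hνeig : A *ᵥ ν = lam ⟨0, hpos⟩ • ν)
    (lamAbs : ℝ) (hAbs : ∀ j : Fin n, j ≠ ⟨0, hpos⟩ → |lam j| ≤ lamAbs)
    (hAbsnn : 0 ≤ lamAbs)
    (hlam0 : 0 < lam ⟨0, hpos⟩)
    (νmin : ℝ) (hνminpos : 0 < νmin) (hνminle : ∀ i, νmin ≤ ν i)
    (AF BF : Finset (Fin n)) (hAne : AF.Nonempty) (hBne : BF.Nonempty)
    (hzero : ∀ i ∈ AF, ∀ j ∈ BF, A i j = 0) :
    Real.sqrt ((AF.card : ℝ) * (BF.card : ℝ))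
      ≤ lamAbs / ((lamAbs + lam ⟨0, hpos⟩) * νmin ^ 2) := by
  classical
  set lam0 : ℝ := lam ⟨0, hpos⟩ with hlam0def
  set a : ℝ := (AF.card : ℝ) with ha
  set b : ℝ := (BF.card : ℝ) with hb
  set p : ℝ := ∑ i ∈ AF, ν i with hp
  set q : ℝ := ∑ i ∈ BF, ν i with hq
  set oneA : Fin n → ℝ := fun i => if i ∈ AF then 1 else 0 with honeA
  set oneB : Fin n → ℝ := fun i => if i ∈ BF then 1 else 0 with honeB
  set u : Fin n → ℝ := fun i => oneA i - p * ν i with hu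
  set v : Fin n → ℝ := fun i => oneB i - q * ν i with hv
  have sum_ind : ∀ (s : Finset (Fin n)) (f : Fin n → ℝ),
      ∑ i, (if i ∈ s then (1:ℝ) else 0) * f i = ∑ i ∈ s, f i := by
    intro s f
    rw [Finset.sum_congr rfl (fun i _ => by rw [ite_mul, one_mul, zero_mul])]
    rw [Finset.sum_ite_mem, Finset.univ_inter]
  have huν : dotProduct u ν = 0 := by
    simp only [dotProduct, hu, sub_mul]
    rw [Finset.sum_sub_distrib, sum_ind]
    have : ∑ i, p * ν i * ν i = p * ∑ i, ν i ^ 2 := by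
      rw [Finset.mul_sum]; exact Finset.sum_congr rfl fun i _ => by ring
    rw [this, hνnorm, mul_one, sub_self]
  have hvν : dotProduct v ν = 0 := by
    simp only [dotProduct, hv, sub_mul]
    rw [Finset.sum_sub_distrib, sum_ind]
    have : ∑ i, q * ν i * ν i = q * ∑ i, ν i ^ 2 := by
      rw [Finset.mul_sum]; exact Finset.sum_congr rfl fun i _ => by ring
    rw [this, hνnorm, mul_one, sub_self]
  have hsumu : ∑ i, u i ^ 2 = a - p ^ 2 := by
    have expand : ∀ i, u i ^ 2 = oneA i ^ 2 - 2 * p * (oneA i * ν i) + p ^ 2 * ν i ^ 2 := by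
      intro i; simp only [hu]; ring
    rw [Finset.sum_congr rfl fun i _ => expand i]
    rw [Finset.sum_add_distrib, Finset.sum_sub_distrib]
    have h1 : ∑ i, oneA i ^ 2 = a := by
      have e1 : ∀ i, oneA i ^ 2 = oneA i := by
        intro i; simp only [honeA]; split <;> norm_num
      rw [Finset.sum_congr rfl fun i _ => e1 i]
      simp [honeA, Finset.sum_ite_mem, ha]
    have h2 : ∑ i, 2 * p * (oneA i * ν i) = 2 * p ^ 2 := by
      rw [← Finset.mul_sum]
      have := sum_ind AF ν
      simp only [honeA]
      rw [this, ← hp]; ring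
    have h3 : ∑ i, p ^ 2 * ν i ^ 2 = p ^ 2 := by
      rw [← Finset.mul_sum, hνnorm, mul_one]
    rw [h1, h2, h3]; ring
  have hsumv : ∑ i, v i ^ 2 = b - q ^ 2 := by
    have expand : ∀ i, v i ^ 2 = oneB i ^ 2 - 2 * q * (oneB i * ν i) + q ^ 2 * ν i ^ 2 := by
      intro i; simp only [hv]; ring
    rw [Finset.sum_congr rfl fun i _ => expand i]
    rw [Finset.sum_add_distrib, Finset.sum_sub_distrib]
    have h1 : ∑ i, oneB i ^ 2 = b := by
      have e1 : ∀ i, oneB i ^ 2 = oneB i := by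
        intro i; simp only [honeB]; split <;> norm_num
      rw [Finset.sum_congr rfl fun i _ => e1 i]
      simp [honeB, Finset.sum_ite_mem, hb]
    have h2 : ∑ i, 2 * q * (oneB i * ν i) = 2 * q ^ 2 := by
      rw [← Finset.mul_sum]
      have := sum_ind BF ν
      simp only [honeB]
      rw [this, ← hq]; ring
    have h3 : ∑ i, q ^ 2 * ν i ^ 2 = q ^ 2 := by
      rw [← Finset.mul_sum, hνnorm, mul_one]
    rw [h1, h2, h3]; ring
  have hAT : Aᵀ = A := by
    have := hAH; rwa [Matrix.IsHermitian, Matrix.conjTranspose_eq_transpose_of_trivial] at this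
  -- the bilinear value
  have hval : dotProduct u (A *ᵥ v) = -(lam0 * p * q) := by
    have hv' : (v : Fin n → ℝ) = oneB - q • ν := by funext i; simp [hv]
    have hABzero : dotProduct oneA (A *ᵥ oneB) = 0 := by
      simp only [dotProduct, Matrix.mulVec, dotProduct]
      rw [Finset.sum_congr rfl (fun i _ => by rw [ite_mul, one_mul, zero_mul])]
      rw [Finset.sum_ite_mem, Finset.univ_inter]
      apply Finset.sum_eq_zero
      intro i hi
      apply Finset.sum_eq_zero
      intro j hj
      by_cases hjB : j ∈ BF
      · rw [hzero i hi j hjB]; simp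
      · simp [honeB, hjB]
    have hνAB : dotProduct ν (A *ᵥ oneB) = lam0 * q := by
      rw [Matrix.dotProduct_mulVec, ← Matrix.mulVec_transpose, hAT, hνeig]
      simp only [smul_dotProduct, smul_eq_mul, ← hlam0def]
      congr 1
      simp only [dotProduct, honeB, hq]
      rw [Finset.sum_congr rfl (fun i _ => by rw [mul_ite, mul_one, mul_zero])]
      rw [Finset.sum_ite_mem, Finset.univ_inter]
    have huAν : dotProduct u (A *ᵥ ν) = 0 := by
      rw [hνeig]
      simp only [dotProduct_smul, smul_eq_mul]
      rw [huν, mul_zero]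
    have hu' : (u : Fin n → ℝ) = oneA - p • ν := by funext i; simp [hu]
    rw [hv', Matrix.mulVec_sub, Matrix.mulVec_smul, dotProduct_sub,
        dotProduct_smul, huAν, smul_zero, sub_zero, hu', sub_dotProduct,
        smul_dotProduct, hABzero, hνAB]
    simp; ring
  -- apply the spectral bound
  have hperp := perp_bound hpos hAH lam e he ν hνnorm hνeig lamAbs hAbs (le_of_lt hlam0) u huν
  have hbd := bilin_bound hAH hAbsnn u v hperp
  rw [hval, hsumu, hsumv] at hbd
  rw [abs_neg] at hbd
  -- positivity facts
  have hpq : 0 < p ∧ 0 < q := by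
    constructor
    · exact Finset.sum_pos (fun i _ => lt_of_lt_of_le hνminpos (hνminle i)) hAne
    · exact Finset.sum_pos (fun i _ => lt_of_lt_of_le hνminpos (hνminle i)) hBne
  obtain ⟨hppos, hqpos⟩ := hpq
  have habs : |lam0 * p * q| = lam0 * p * q := abs_of_pos (mul_pos (mul_pos hlam0 hppos) hqpos)
  rw [habs] at hbd
  have hp2 : p ^ 2 ≤ a := by
    have : (0:ℝ) ≤ a - p ^ 2 := hsumu ▸ Finset.sum_nonneg fun i _ => sq_nonneg _
    linarith
  have hq2 : q ^ 2 ≤ b := by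
    have : (0:ℝ) ≤ b - q ^ 2 := hsumv ▸ Finset.sum_nonneg fun i _ => sq_nonneg _
    linarith
  have hanneg : (0:ℝ) ≤ a := by positivity
  have hbnneg : (0:ℝ) ≤ b := by positivity
  have hpa : p ≤ Real.sqrt a := by
    rw [show p = Real.sqrt (p^2) from (Real.sqrt_sq hppos.le).symm]
    exact Real.sqrt_le_sqrt hp2
  have hqb : q ≤ Real.sqrt b := by
    rw [show q = Real.sqrt (q^2) from (Real.sqrt_sq hqpos.le).symm]
    exact Real.sqrt_le_sqrt hq2
  -- AM-GM step
  have hsqrtab : Real.sqrt (a - p^2) * Real.sqrt (b - q^2) ≤ Real.sqrt a * Real.sqrt b - p * q := by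
    have hrhs : 0 ≤ Real.sqrt a * Real.sqrt b - p * q := by
      have := mul_le_mul hpa hqb hqpos.le (Real.sqrt_nonneg a)
      linarith
    rw [← Real.sqrt_mul (by linarith) (b - q^2)]
    rw [show Real.sqrt a * Real.sqrt b - p * q
        = Real.sqrt ((Real.sqrt a * Real.sqrt b - p * q)^2) from (Real.sqrt_sq hrhs).symm]
    apply Real.sqrt_le_sqrt
    have hsa : Real.sqrt a ^ 2 = a := Real.sq_sqrt hanneg
    have hsb : Real.sqrt b ^ 2 = b := Real.sq_sqrt hbnneg
    nlinarith [sq_nonneg (Real.sqrt a * q - Real.sqrt b * p), Real.sqrt_nonneg a, Real.sqrt_nonneg b]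
  have step : (lam0 + lamAbs) * (p * q) ≤ lamAbs * (Real.sqrt a * Real.sqrt b) := by
    have h2 : lamAbs * (Real.sqrt (a - p^2) * Real.sqrt (b - q^2))
        ≤ lamAbs * (Real.sqrt a * Real.sqrt b - p * q) :=
      mul_le_mul_of_nonneg_left hsqrtab hAbsnn
    have h3 : lam0 * p * q ≤ lamAbs * (Real.sqrt a * Real.sqrt b - p * q) := by
      calc lam0 * p * q ≤ lamAbs * Real.sqrt (a - p^2) * Real.sqrt (b - q^2) := hbd
        _ = lamAbs * (Real.sqrt (a - p^2) * Real.sqrt (b - q^2)) := by ring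
        _ ≤ _ := h2
    linarith
  have hpqge : a * b * νmin ^ 2 ≤ p * q := by
    have hpge : a * νmin ≤ p := by
      calc a * νmin = ∑ _i ∈ AF, νmin := by rw [Finset.sum_const, ha]; push_cast; ring
        _ ≤ p := Finset.sum_le_sum fun i _ => hνminle i
    have hqge : b * νmin ≤ q := by
      calc b * νmin = ∑ _i ∈ BF, νmin := by rw [Finset.sum_const, hb]; push_cast; ring
        _ ≤ q := Finset.sum_le_sum fun i _ => hνminle i
    calc a * b * νmin ^ 2 = (a * νmin) * (b * νmin) := by ring
      _ ≤ p * q := by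
          exact mul_le_mul hpge hqge (mul_nonneg hbnneg hνminpos.le) (le_trans (mul_nonneg hanneg hνminpos.le) hpge)
  -- conclude
  set s : ℝ := Real.sqrt (a * b) with hs
  have hsab : Real.sqrt a * Real.sqrt b = s := (Real.sqrt_mul hanneg b).symm
  have hspos : 0 < s := by
    rw [hs]
    apply Real.sqrt_pos.mpr
    have ha1 : (1:ℝ) ≤ a := by
      rw [ha]; exact_mod_cast Nat.one_le_iff_ne_zero.mpr (Finset.card_ne_zero_of_mem hAne.choose_spec)
    have hb1 : (1:ℝ) ≤ b := by
      rw [hb]; exact_mod_cast Nat.one_le_iff_ne_zero.mpr (Finset.card_ne_zero_of_mem hBne.choose_spec)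
    nlinarith
  have final : (lamAbs + lam0) * νmin ^ 2 * (s * s) ≤ lamAbs * s := by
    have h1 : (lam0 + lamAbs) * (a * b * νmin ^ 2) ≤ (lam0 + lamAbs) * (p * q) :=
      mul_le_mul_of_nonneg_left hpqge (by linarith)
    have h2 := step
    have h3 : s * s = a * b := by rw [hs]; exact Real.mul_self_sqrt (by positivity)
    rw [hsab] at h2
    calc (lamAbs + lam0) * νmin ^ 2 * (s * s) = (lam0 + lamAbs) * (a * b * νmin ^ 2) := by
          rw [h3]; ring
      _ ≤ (lam0 + lamAbs) * (p * q) := h1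
      _ ≤ lamAbs * s := h2
  rw [le_div_iff₀ (mul_pos (by linarith) (pow_pos hνminpos 2))]
  nlinarith [final, hspos]

lemma split_lemma {α : Type*} [DecidableEq α] (s : Finset α) (f : α → ℕ) (κ : ℕ)
    (hf : ∀ a ∈ s, f a ≤ κ) :
    ∃ T ⊆ s, (∑ a ∈ s, f a ≤ 2 * ∑ a ∈ T, f a + κ) ∧ (2 * ∑ a ∈ T, f a ≤ ∑ a ∈ s, f a + κ) := by
  classical
  set P : Finset (Finset α) := s.powerset.filter (fun T => 2 * ∑ a ∈ T, f a ≤ ∑ a ∈ s, f a + κ)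
    with hP
  have hPne : P.Nonempty := by
    refine ⟨∅, ?_⟩
    simp [hP]
  obtain ⟨T, hTP, hTmax⟩ := P.exists_max_image (fun T => ∑ a ∈ T, f a) hPne
  rw [hP, Finset.mem_filter, Finset.mem_powerset] at hTP
  obtain ⟨hTs, hTle⟩ := hTP
  refine ⟨T, hTs, ?_, hTle⟩
  by_contra hc
  push_neg at hc
  have hsplit : ∑ a ∈ s \ T, f a + ∑ a ∈ T, f a = ∑ a ∈ s, f a := Finset.sum_sdiff hTs
  have hpos : 0 < ∑ a ∈ s \ T, f a := by omega
  obtain ⟨x, hx, hfx⟩ : ∃ x ∈ s \ T, f x ≠ 0 := by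
    by_contra hall
    push_neg at hall
    have : ∑ a ∈ s \ T, f a = 0 := Finset.sum_eq_zero hall
    omega
  have hxT : x ∉ T := (Finset.mem_sdiff.mp hx).2
  have hxs : x ∈ s := (Finset.mem_sdiff.mp hx).1
  have hsum : ∑ a ∈ insert x T, f a = f x + ∑ a ∈ T, f a := Finset.sum_insert hxT
  have hmem : insert x T ∈ P := by
    rw [hP, Finset.mem_filter, Finset.mem_powerset]
    constructor
    · exact Finset.insert_subset hxs hTs
    · rw [hsum]
      have := hf x hxs
      omega
  have := hTmax _ hmem
  rw [hsum] at this
  omega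

lemma components_split {n : ℕ} (G : SimpleGraph (Fin n)) (S : Finset (Fin n)) :
    ∃ AF BF : Finset (Fin n),
      (∀ a ∈ AF, ∀ b ∈ BF, ¬ G.Adj a b) ∧
      Nat.card {x : Fin n | x ∉ S} ≤ 2 * AF.card + maxCompSize G S ∧
      Nat.card {x : Fin n | x ∉ S} ≤ 2 * BF.card + maxCompSize G S := by
  classical
  set V' : Set (Fin n) := {x : Fin n | x ∉ S} with hV'
  set H : SimpleGraph ↥V' := G.induce V' with hH
  set κ : ℕ := maxCompSize G S with hκ
  have hfin : Finite ↥V' := Subtype.finite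
  have hfinC : Finite H.ConnectedComponent := Quot.finite _
  have : Fintype ↥V' := Fintype.ofFinite _
  have : Fintype H.ConnectedComponent := Fintype.ofFinite _
  set f : H.ConnectedComponent → ℕ :=
    fun c => (Finset.univ.filter (fun x : ↥V' => H.connectedComponentMk x = c)).card with hf
  -- each component has size ≤ κ
  have hcomp_le : ∀ c, f c ≤ κ := by
    intro c
    obtain ⟨v, rfl⟩ := c.exists_rep
    show f (H.connectedComponentMk v) ≤ κ
    have hset : Finset.univ.filter (fun x : ↥V' => H.connectedComponentMk x = H.connectedComponentMk v)
        = Finset.univ.filter (fun x : ↥V' => H.Reachable v x) := by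
      ext x
      simp only [Finset.mem_filter, Finset.mem_univ, true_and]
      constructor
      · intro h; exact ((SimpleGraph.ConnectedComponent.eq).mp h).symm
      · intro h; exact ((SimpleGraph.ConnectedComponent.eq).mpr h.symm)
    have h1 : f (H.connectedComponentMk v) = Nat.card {w : ↥V' // H.Reachable v w} := by
      rw [Nat.card_eq_fintype_card, Fintype.card_subtype, hf]
      simp only
      rw [hset]
    rw [h1, hκ, maxCompSize]
    apply le_csSup
    · refine ⟨Nat.card ↥V', ?_⟩
      rintro k ⟨v', rfl⟩
      exact Nat.card_le_card_of_injective (fun w => w.1) Subtype.val_injective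
    · exact ⟨v, rfl⟩
  have hsum : ∑ c, f c = Nat.card ↥V' := by
    rw [Nat.card_eq_fintype_card, ← Finset.card_univ]
    exact (Finset.card_eq_sum_card_fiberwise (fun x _ => Finset.mem_univ _)).symm
  obtain ⟨T, hTs, hT1, hT2⟩ := split_lemma Finset.univ f κ (fun a _ => hcomp_le a)
  set A' : Finset ↥V' := Finset.univ.filter (fun x => H.connectedComponentMk x ∈ T) with hA'
  set B' : Finset ↥V' := Finset.univ.filter (fun x => H.connectedComponentMk x ∉ T) with hB'
  have hcardA : A'.card = ∑ c ∈ T, f c := by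
    rw [hA']
    rw [Finset.card_eq_sum_card_fiberwise
      (f := fun x : ↥V' => H.connectedComponentMk x) (t := T)
      (s := Finset.univ.filter (fun x => H.connectedComponentMk x ∈ T))
      (fun x hx => (Finset.mem_filter.mp hx).2)]
    apply Finset.sum_congr rfl
    intro c hc
    rw [hf]
    congr 1
    ext x
    simp only [Finset.mem_filter, Finset.mem_univ, true_and]
    constructor
    · rintro ⟨_, h2⟩; exact h2
    · intro h; exact ⟨h ▸ hc, h⟩
  have hcardAB : A'.card + B'.card = Fintype.card ↥V' := by
    rw [hA', hB', ← Finset.card_univ]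
    exact Finset.card_filter_add_card_filter_not _
  have hsumT : ∑ c ∈ T, f c + ∑ c ∈ Finset.univ \ T, f c = ∑ c, f c := by
    rw [add_comm]; exact Finset.sum_sdiff (Finset.subset_univ T)
  refine ⟨A'.map ⟨Subtype.val, Subtype.val_injective⟩,
          B'.map ⟨Subtype.val, Subtype.val_injective⟩, ?_, ?_, ?_⟩
  · rintro a ha b hb hadj
    rw [Finset.mem_map] at ha hb
    obtain ⟨x, hx, rfl⟩ := ha
    obtain ⟨y, hy, rfl⟩ := hb
    rw [hA', Finset.mem_filter] at hx
    rw [hB', Finset.mem_filter] at hy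
    have hHadj : H.Adj x y := hadj
    have : H.connectedComponentMk x = H.connectedComponentMk y :=
      SimpleGraph.ConnectedComponent.connectedComponentMk_eq_of_adj hHadj
    exact hy.2 (this ▸ hx.2)
  · rw [Finset.card_map, hcardA, Nat.card_eq_fintype_card]
    have e1 := hsum
    rw [Nat.card_eq_fintype_card] at e1
    omega
  · rw [Finset.card_map, Nat.card_eq_fintype_card]
    have e1 := hsum
    rw [Nat.card_eq_fintype_card] at e1
    omega

/-- **Perron spectral lower bound on the vertex integrity**
(Theorem 27(ii) of the paper). -/
theorem vertex_integrity_perron_bound {n : ℕ} (hn : 2 ≤ n)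
    (G : SimpleGraph (Fin n)) [DecidableRel G.Adj] (hG : G.Connected)
    (A : Matrix (Fin n) (Fin n) ℝ) (hA : A = G.adjMatrix ℝ)
    (hAH : A.IsHermitian)
    (lam : Fin n → ℝ) (hmono : Antitone lam)
    (heig : ∃ e : Fin n ≃ Fin n, ∀ i, lam i = hAH.eigenvalues (e i))
    (ν : Fin n → ℝ) (hνpos : ∀ i, 0 < ν i) (hνnorm : ∑ i, ν i ^ 2 = 1)
    (hνeig : A *ᵥ ν = lam ⟨0, by omega⟩ • ν)
    (lamAbs : ℝ)
    (hlamAbs : lamAbs = max |lam ⟨1, by omega⟩| |lam ⟨n - 1, by omega⟩|)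
    (νmin : ℝ) (hνmin : IsLeast (Set.range ν) νmin) :
    (vertexIntegrity G : ℝ) ≥
      n * (1 - 2 * lamAbs / (n * (lamAbs + lam ⟨0, by omega⟩) * νmin ^ 2)) := by
  classical
  have hpos : 0 < n := by omega
  set z : Fin n := ⟨0, hpos⟩ with hz
  set lam0 : ℝ := lam z with hlam0def
  obtain ⟨e, he⟩ := heig
  -- basic positivity facts
  have hνminpos : 0 < νmin := by
    obtain ⟨i, hi⟩ := hνmin.1
    rw [← hi]; exact hνpos i
  have hνminle : ∀ i, νmin ≤ ν i := fun i => hνmin.2 ⟨i, rfl⟩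
  have hAbsnn : 0 ≤ lamAbs := by
    rw [hlamAbs]; exact le_trans (abs_nonneg _) (le_max_left _ _)
  have hAbs : ∀ j : Fin n, j ≠ z → |lam j| ≤ lamAbs := by
    intro j hj
    have hj1 : (1 : ℕ) ≤ j.1 := by
      by_contra hc
      push_neg at hc
      apply hj
      apply Fin.ext
      show j.1 = (0 : ℕ)
      omega
    have hle1 : lam j ≤ lam ⟨1, by omega⟩ := hmono (by
      show (⟨1, by omega⟩ : Fin n) ≤ j
      exact Fin.mk_le_mk.mpr hj1)
    have hge1 : lam ⟨n - 1, by omega⟩ ≤ lam j := hmono (by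
      show j ≤ (⟨n - 1, by omega⟩ : Fin n)
      exact Fin.mk_le_mk.mpr (by omega))
    rw [hlamAbs]
    rw [abs_le]
    constructor
    · have := neg_abs_le (lam ⟨n - 1, by omega⟩)
      have h2 : |lam ⟨n-1, by omega⟩| ≤ max |lam ⟨1, by omega⟩| |lam ⟨n - 1, by omega⟩| :=
        le_max_right _ _
      linarith
    · have := le_abs_self (lam ⟨1, by omega⟩)
      have h2 : |lam ⟨1, by omega⟩| ≤ max |lam ⟨1, by omega⟩| |lam ⟨n - 1, by omega⟩| :=
        le_max_left _ _
      linarith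
  -- G has an edge
  obtain ⟨a0, b0, hab⟩ : ∃ a b : Fin n, G.Adj a b := by
    obtain ⟨w⟩ := hG.preconnected ⟨0, hpos⟩ ⟨1, by omega⟩
    cases w with
    | cons h _ => exact ⟨_, _, h⟩
  -- lam0 > 0
  have hlam0 : 0 < lam0 := by
    have hentry : ∀ i j, 0 ≤ A i j := by
      intro i j; rw [hA, SimpleGraph.adjMatrix_apply]; split <;> norm_num
    have hval : dotProduct ν (A *ᵥ ν) = lam0 := by
      rw [hνeig]
      show dotProduct ν (lam0 • ν) = lam0
      rw [dotProduct_smul, smul_eq_mul]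
      have : dotProduct ν ν = ∑ i, ν i ^ 2 := by simp [dotProduct, sq]
      rw [this, hνnorm, mul_one]
    have hterm : A a0 b0 * ν b0 ≤ ∑ j, A a0 j * ν j := by
      apply Finset.single_le_sum (f := fun j => A a0 j * ν j)
      · intro j _; exact mul_nonneg (hentry a0 j) (hνpos j).le
      · exact Finset.mem_univ b0
    have hterm2 : ν a0 * (∑ j, A a0 j * ν j) ≤ dotProduct ν (A *ᵥ ν) := by
      apply Finset.single_le_sum (f := fun i => ν i * ∑ j, A i j * ν j)
        (fun i _ => mul_nonneg (hνpos i).le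
          (Finset.sum_nonneg fun j _ => mul_nonneg (hentry i j) (hνpos j).le))
        (Finset.mem_univ a0)
    have hA1 : A a0 b0 = 1 := by
      rw [hA, SimpleGraph.adjMatrix_apply, if_pos hab]
    have h1 : 0 < ν a0 * (A a0 b0 * ν b0) := by
      rw [hA1, one_mul]; exact mul_pos (hνpos a0) (hνpos b0)
    have h2 : ν a0 * (A a0 b0 * ν b0) ≤ ν a0 * (∑ j, A a0 j * ν j) :=
      mul_le_mul_of_nonneg_left hterm (hνpos a0).le
    rw [← hval] at *
    linarith
  -- reduce RHS
  have hD : 0 < (lamAbs + lam0) * νmin ^ 2 :=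
    mul_pos (by linarith) (pow_pos hνminpos 2)
  set x : ℝ := lamAbs / ((lamAbs + lam0) * νmin ^ 2) with hx
  have hxnn : 0 ≤ x := div_nonneg hAbsnn hD.le
  have hRHS : (n : ℝ) * (1 - 2 * lamAbs / (n * (lamAbs + lam0) * νmin ^ 2))
      = n - 2 * x := by
    have hn0 : (n : ℝ) ≠ 0 := by positivity
    rw [hx]
    field_simp
  rw [ge_iff_le, hRHS]
  -- the key per-S bound
  have key : ∀ S : Finset (Fin n), (n : ℝ) - 2 * x ≤ (S.card + maxCompSize G S : ℕ) := by
    intro S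
    set κ : ℕ := maxCompSize G S with hκ
    set m : ℕ := Nat.card {x : Fin n | x ∉ S} with hm
    have hmn : S.card + m = n := by
      have h1 : m = Fintype.card {x : Fin n | x ∉ S} := by
        rw [hm, Nat.card_eq_fintype_card]
      have h2 : Fintype.card {x : Fin n | x ∉ S} = Fintype.card (Fin n) - S.card := by
        have h3 := Fintype.card_subtype_compl (p := fun x : Fin n => x ∈ S)
        have h4 : Fintype.card {x : Fin n // x ∈ S} = S.card := Fintype.card_coe S
        rw [h4] at h3
        rw [← h3]
        apply Fintype.card_congr
        exact Equiv.subtypeEquivRight (fun x => Iff.rfl)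
      have h5 : S.card ≤ Fintype.card (Fin n) := Finset.card_le_univ S
      rw [Fintype.card_fin] at h2 h5
      omega
    by_cases hcase : m ≤ κ
    · have : (n : ℝ) ≤ ((S.card + κ : ℕ) : ℝ) := by
        push_cast
        have : S.card + m ≤ S.card + κ := by omega
        exact_mod_cast le_trans (le_of_eq (by exact_mod_cast hmn.symm)) (by exact_mod_cast this)
      linarith
    · push_neg at hcase
      obtain ⟨AF, BF, hAdj, hA1, hB1⟩ := components_split G S
      rw [← hm, ← hκ] at hA1 hB1
      have hAne : AF.Nonempty := by
        rw [← Finset.card_pos]; omega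
      have hBne : BF.Nonempty := by
        rw [← Finset.card_pos]; omega
      have hzero : ∀ i ∈ AF, ∀ j ∈ BF, A i j = 0 := by
        intro i hi j hj
        rw [hA, SimpleGraph.adjMatrix_apply, if_neg (hAdj i hi j hj)]
      have heml := eml_bound hpos hAH lam e he ν hνnorm hνeig lamAbs hAbs hAbsnn hlam0
        νmin hνminpos hνminle AF BF hAne hBne hzero
      rw [← hx] at heml
      -- min(|AF|,|BF|) ≤ x
      have hmin : (min AF.card BF.card : ℝ) ≤ x := by
        rcases le_total AF.card BF.card with hle | hle
        · have hc : ((AF.card : ℝ)) ≤ (BF.card : ℝ) := by exact_mod_cast hle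
          have h1 : ((AF.card : ℝ)) ≤ Real.sqrt ((AF.card : ℝ) * (BF.card : ℝ)) := by
            rw [Real.le_sqrt (by positivity) (by positivity)]
            nlinarith [Nat.cast_nonneg (α := ℝ) AF.card]
          rw [min_eq_left hc]
          exact le_trans h1 heml
        · have hc : ((BF.card : ℝ)) ≤ (AF.card : ℝ) := by exact_mod_cast hle
          have h1 : ((BF.card : ℝ)) ≤ Real.sqrt ((AF.card : ℝ) * (BF.card : ℝ)) := by
            rw [mul_comm, Real.le_sqrt (by positivity) (by positivity)]
            nlinarith [Nat.cast_nonneg (α := ℝ) BF.card]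
          rw [min_eq_right hc]
          exact le_trans h1 heml
      have hm2 : (m : ℝ) ≤ 2 * (min AF.card BF.card : ℝ) + (κ : ℝ) := by
        have : m ≤ 2 * min AF.card BF.card + κ := by
          rcases le_total AF.card BF.card with hle | hle
          · rw [min_eq_left hle]; omega
          · rw [min_eq_right hle]; omega
        exact_mod_cast this
      have : (n : ℝ) = (S.card : ℝ) + (m : ℝ) := by exact_mod_cast hmn.symm
      push_cast
      rw [this] at *
      linarith
  -- conclude via sInf membership
  have hne : {m | ∃ S : Finset (Fin n), m = S.card + maxCompSize G S}.Nonempty :=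
    ⟨(∅ : Finset (Fin n)).card + maxCompSize G ∅, ⟨∅, rfl⟩⟩
  have hmem := Nat.sInf_mem hne
  obtain ⟨S₀, hS₀⟩ := hmem
  rw [vertexIntegrity, hS₀]
  exact key S₀
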